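/- Assume 0 < θ ≤ 1 and mX ≠ 0, and fix all parameters except the demand jump intensity. Let 0 ≤ λX′ < λX″ be two jump intensities; for k ∈ {′, ″} let hᵏ, jᵏ be h and j computed with λX = λXᵏ, assume ρ > μI and h′ > 0 (then h″ ≥ h′ > 0), let r0ᵏ be the unique positive root of jᵏ (then r0ᵏ > 1), set Aᵏ = e^(−hᵏ·n)/hᵏ and q⋆ᵏ = r0ᵏ/((κ1 − κ0)·Aᵏ·(r0ᵏ − 1)). If in addition θ·r0′ ≥ 1, then q⋆′ < q⋆″: the investment threshold is strictly increasing in the demand jump intensity λX. -/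

import Mathlib

open Real Set

lemma convexOn_exp_mul (α : ℝ) : ConvexOn ℝ Set.univ (fun r : ℝ => Real.exp (α * r)) := by
  refine ⟨convex_univ, ?_⟩
  intro x _ y _ a b ha hb hab
  have h := convexOn_exp.2 (Set.mem_univ (α * x)) (Set.mem_univ (α * y)) ha hb hab
  simp only [smul_eq_mul] at h ⊢
  calc Real.exp (α * (a * x + b * y)) = Real.exp (a * (α * x) + b * (α * y)) := by ring_nf
    _ ≤ a * Real.exp (α * x) + b * Real.exp (α * y) := h

lemma convexOn_affine (b c : ℝ) : ConvexOn ℝ Set.univ (fun r : ℝ => b * r + c) := by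
  refine ⟨convex_univ, ?_⟩
  intro x _ y _ a t ha ht hab
  simp only [smul_eq_mul]
  have h : b * (a * x + t * y) + c = a * (b * x + c) + t * (b * y + c) := by
    linear_combination (-c) * hab
  linarith [h.le]

lemma convexOn_master (a b c p α q β : ℝ) (ha : 0 ≤ a) (hp : 0 ≤ p) (hq : 0 ≤ q) :
    ConvexOn ℝ Set.univ (fun r : ℝ =>
      a * r ^ 2 + b * r + c + p * Real.exp (α * r) + q * Real.exp (β * r)) := by
  have h1 : ConvexOn ℝ Set.univ (fun r : ℝ => a * r ^ 2) := by
    have := (Even.convexOn_pow (n := 2) (by norm_num)).smul ha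
    simpa [smul_eq_mul] using this
  have h2 := convexOn_affine b c
  have h3 := (convexOn_exp_mul α).smul hp
  have h4 := (convexOn_exp_mul β).smul hq
  have H := ((h1.add h2).add h3).add h4
  have heq : (fun r : ℝ =>
      a * r ^ 2 + b * r + c + p * Real.exp (α * r) + q * Real.exp (β * r))
      = ((fun r : ℝ => a * r ^ 2) + (fun r : ℝ => b * r + c))
        + p • (fun r : ℝ => Real.exp (α * r)) + q • (fun r : ℝ => Real.exp (β * r)) := by
    funext r
    simp only [Pi.add_apply, Pi.smul_apply, smul_eq_mul]
    ring
  rw [heq]; exact H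

lemma neg_between {f : ℝ → ℝ} (hf : ConvexOn ℝ Set.univ f) {x y z : ℝ}
    (hxy : x < y) (hyz : y < z) (hfx : f x < 0) (hfz : f z ≤ 0) : f y < 0 := by
  have hzx : (0:ℝ) < z - x := by linarith
  have htpos : 0 < (z - y) / (z - x) := div_pos (by linarith) hzx
  have hspos : 0 < (y - x) / (z - x) := div_pos (by linarith) hzx
  have hts : (z - y) / (z - x) + (y - x) / (z - x) = 1 := by field_simp; ring
  have key := hf.2 (Set.mem_univ x) (Set.mem_univ z) htpos.le hspos.le hts
  have hy : ((z - y) / (z - x)) • x + ((y - x) / (z - x)) • z = y := by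
    rw [smul_eq_mul, smul_eq_mul]; field_simp [hzx.ne']; ring
  rw [hy, smul_eq_mul, smul_eq_mul] at key
  nlinarith [mul_pos htpos (neg_pos.mpr hfx), mul_nonneg hspos.le (neg_nonneg.mpr hfz)]

set_option maxHeartbeats 1000000 in
/-- For `1/r0 ≤ θ ≤ 1` and `mX ≠ 0`, the investment threshold
`q⋆ = r0/((κ1-κ0) A (r0-1))` is strictly increasing in the demand jump intensity `λX`. -/
theorem threshold_increasing_in_lamX (θ ρ μX σX mX μI σI lamI mI n κ0 κ1 : ℝ)
    (hθ : 0 < θ) (hθ1 : θ ≤ 1) (hσX : 0 < σX) (hmX : -1 < mX) (hmX0 : mX ≠ 0)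
    (hσI : 0 < σI) (hlamI : 0 ≤ lamI) (hmI : -1 < mI)
    (hn : 0 ≤ n) (hκ0 : 0 < κ0) (hκ : κ0 < κ1)
    (hρ : μI < ρ)
    (lamX' lamX'' : ℝ) (hlamX' : 0 ≤ lamX') (hlam : lamX' < lamX'')
    (h' h'' A' A'' : ℝ)
    (hh' : h' = ρ - (μX + (θ - 1) * σX ^ 2 / 2 - lamX' * mX) * θ
      - lamX' * ((1 + mX) ^ θ - 1))
    (hh'' : h'' = ρ - (μX + (θ - 1) * σX ^ 2 / 2 - lamX'' * mX) * θ
      - lamX'' * ((1 + mX) ^ θ - 1))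
    (hh'pos : 0 < h')
    (hA' : A' = Real.exp (-(h' * n)) / h')
    (hA'' : A'' = Real.exp (-(h'' * n)) / h'')
    (j' j'' : ℝ → ℝ)
    (hj' : ∀ r : ℝ, j' r = ((θ ^ 2 * σX ^ 2 + σI ^ 2) / 2) * r ^ 2
      + ((μX - σX ^ 2 / 2 - lamX' * mX) * θ - (μI + σI ^ 2 / 2 - lamI * mI)) * r
      + ((μI - lamI * mI) - (lamX' + lamI) - ρ)
      + lamX' * (1 + mX) ^ (θ * r) + lamI * (1 + mI) ^ (1 - r))
    (hj'' : ∀ r : ℝ, j'' r = ((θ ^ 2 * σX ^ 2 + σI ^ 2) / 2) * r ^ 2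
      + ((μX - σX ^ 2 / 2 - lamX'' * mX) * θ - (μI + σI ^ 2 / 2 - lamI * mI)) * r
      + ((μI - lamI * mI) - (lamX'' + lamI) - ρ)
      + lamX'' * (1 + mX) ^ (θ * r) + lamI * (1 + mI) ^ (1 - r))
    (r0' r0'' : ℝ)
    (hr0' : 0 < r0' ∧ j' r0' = 0) (hr0'' : 0 < r0'' ∧ j'' r0'' = 0)
    (hθr : 1 ≤ θ * r0') :
    h' ≤ h'' ∧ 1 < r0' ∧ 1 < r0''
    ∧ r0' / ((κ1 - κ0) * A' * (r0' - 1)) < r0'' / ((κ1 - κ0) * A'' * (r0'' - 1)) := by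
  obtain ⟨hr0'pos, hjr0'⟩ := hr0'
  obtain ⟨hr0''pos, hjr0''⟩ := hr0''
  have hbX : (0:ℝ) < 1 + mX := by linarith
  have hbI : (0:ℝ) < 1 + mI := by linarith
  -- Bernoulli (non-strict, exponent ≤ 1)
  have bern_le : (1 + mX) ^ θ ≤ 1 + θ * mX :=
    rpow_one_add_le_one_add_mul_self hmX.le hθ.le hθ1
  -- h' ≤ h''
  have hdiff : h'' - h' = (lamX'' - lamX') * (1 + θ * mX - (1 + mX) ^ θ) := by
    rw [hh', hh'']; ring
  have hle : h' ≤ h'' := by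
    have hp := mul_nonneg (by linarith : (0:ℝ) ≤ lamX'' - lamX')
      (by linarith : (0:ℝ) ≤ 1 + θ * mX - (1 + mX) ^ θ)
    linarith [hp, hdiff]
  have hh''pos : 0 < h'' := lt_of_lt_of_le hh'pos hle
  -- rewriting rpow as exp to get convexity
  have hrepr : ∀ (lam r : ℝ), lam * (1 + mX) ^ (θ * r)
      = lam * Real.exp ((θ * Real.log (1 + mX)) * r) := by
    intro lam r
    rw [Real.rpow_def_of_pos hbX]
    congr 2
    ring
  have hreprI : ∀ r : ℝ, lamI * (1 + mI) ^ (1 - r)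
      = (lamI * (1 + mI)) * Real.exp ((-Real.log (1 + mI)) * r) := by
    intro r
    rw [Real.rpow_def_of_pos hbI,
      show Real.log (1 + mI) * (1 - r) = Real.log (1 + mI) + (-Real.log (1 + mI)) * r by ring,
      Real.exp_add, Real.exp_log hbI]
    ring
  have hconv : ∀ (jf : ℝ → ℝ) (lam : ℝ), 0 ≤ lam →
      (∀ r : ℝ, jf r = ((θ ^ 2 * σX ^ 2 + σI ^ 2) / 2) * r ^ 2
        + ((μX - σX ^ 2 / 2 - lam * mX) * θ - (μI + σI ^ 2 / 2 - lamI * mI)) * r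
        + ((μI - lamI * mI) - (lam + lamI) - ρ)
        + lam * (1 + mX) ^ (θ * r) + lamI * (1 + mI) ^ (1 - r)) →
      ConvexOn ℝ Set.univ jf := by
    intro jf lam hlam0 hjf
    have H := convexOn_master ((θ ^ 2 * σX ^ 2 + σI ^ 2) / 2)
      ((μX - σX ^ 2 / 2 - lam * mX) * θ - (μI + σI ^ 2 / 2 - lamI * mI))
      ((μI - lamI * mI) - (lam + lamI) - ρ)
      lam (θ * Real.log (1 + mX)) (lamI * (1 + mI)) (-Real.log (1 + mI))
      (by positivity) hlam0 (mul_nonneg hlamI hbI.le)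
    have hfun : jf = fun r : ℝ => ((θ ^ 2 * σX ^ 2 + σI ^ 2) / 2) * r ^ 2
        + ((μX - σX ^ 2 / 2 - lam * mX) * θ - (μI + σI ^ 2 / 2 - lamI * mI)) * r
        + ((μI - lamI * mI) - (lam + lamI) - ρ)
        + lam * Real.exp ((θ * Real.log (1 + mX)) * r)
        + (lamI * (1 + mI)) * Real.exp ((-Real.log (1 + mI)) * r) := by
      funext r
      rw [hjf r, hrepr lam r, hreprI r]
    rw [hfun]; exact H
  have hconv' : ConvexOn ℝ Set.univ j' := hconv j' lamX' hlamX' hj'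
  have hconv'' : ConvexOn ℝ Set.univ j'' := hconv j'' lamX'' (by linarith) hj''
  -- values at 0 and 1
  have hval0 : ∀ (jf : ℝ → ℝ) (lam : ℝ),
      (∀ r : ℝ, jf r = ((θ ^ 2 * σX ^ 2 + σI ^ 2) / 2) * r ^ 2
        + ((μX - σX ^ 2 / 2 - lam * mX) * θ - (μI + σI ^ 2 / 2 - lamI * mI)) * r
        + ((μI - lamI * mI) - (lam + lamI) - ρ)
        + lam * (1 + mX) ^ (θ * r) + lamI * (1 + mI) ^ (1 - r)) →
      jf 0 = μI - ρ := by
    intro jf lam hjf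
    have h0 := hjf 0
    simp only [mul_zero, Real.rpow_zero, sub_zero, Real.rpow_one, ne_eq, zero_pow,
      OfNat.ofNat_ne_zero, not_false_eq_true, mul_one, add_zero, zero_add] at h0
    rw [h0]; ring
  have hj'0 : j' 0 < 0 := by rw [hval0 j' lamX' hj']; linarith
  have hj''0 : j'' 0 < 0 := by rw [hval0 j'' lamX'' hj'']; linarith
  have hj'1 : j' 1 = -h' := by
    have h1 := hj' 1
    simp only [mul_one, one_pow, sub_self, Real.rpow_zero] at h1
    rw [h1, hh']; ring
  have hj''1 : j'' 1 = -h'' := by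
    have h1 := hj'' 1
    simp only [mul_one, one_pow, sub_self, Real.rpow_zero] at h1
    rw [h1, hh'']; ring
  -- roots exceed 1
  have hgt1 : ∀ (jf : ℝ → ℝ) (r0 h0 : ℝ), ConvexOn ℝ Set.univ jf → 0 < r0 → jf r0 = 0 →
      jf 0 < 0 → jf 1 = -h0 → 0 < h0 → 1 < r0 := by
    intro jf r0 h0 hcv hr0pos hroot hzero hone hpos
    rcases lt_trichotomy r0 1 with hlt | heq | hgt
    · have := neg_between hcv hr0pos hlt hzero (by rw [hone]; linarith)
      linarith [this, hroot.ge]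
    · exfalso; rw [heq] at hroot; rw [hroot] at hone; linarith
    · exact hgt
  have hr0'gt1 : 1 < r0' := hgt1 j' r0' h' hconv' hr0'pos hjr0' hj'0 hj'1 hh'pos
  have hr0''gt1 : 1 < r0'' := hgt1 j'' r0'' h'' hconv'' hr0''pos hjr0'' hj''0 hj''1 hh''pos
  -- j'' at r0'
  have hgap : j'' r0' - j' r0'
      = (lamX'' - lamX') * ((1 + mX) ^ (θ * r0') - (1 + (θ * r0') * mX)) := by
    rw [hj'' r0', hj' r0']; ring
  have bern2 : 1 + (θ * r0') * mX ≤ (1 + mX) ^ (θ * r0') :=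
    one_add_mul_self_le_rpow_one_add hmX.le hθr
  have hj''r0' : 0 ≤ j'' r0' := by
    have hp := mul_nonneg (by linarith : (0:ℝ) ≤ lamX'' - lamX')
      (by linarith : (0:ℝ) ≤ (1 + mX) ^ (θ * r0') - (1 + (θ * r0') * mX))
    linarith [hp, hgap, hjr0'.ge, hjr0'.le]
  -- r0'' ≤ r0'
  have hle_r : r0'' ≤ r0' := by
    by_contra hcon
    push_neg at hcon
    have := neg_between hconv'' hr0'gt1 hcon (by rw [hj''1]; linarith) hjr0''.le
    linarith
  -- strictness
  have hstrict : h' < h'' ∨ r0'' < r0' := by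
    rcases eq_or_lt_of_le hθr with heq | hgt
    · left
      have hθlt : θ < 1 := by
        have h2 : θ * 1 < θ * r0' := mul_lt_mul_of_pos_left hr0'gt1 hθ
        rw [mul_one] at h2; linarith
      have bs : (1 + mX) ^ θ < 1 + θ * mX :=
        rpow_one_add_lt_one_add_mul_self hmX.le hmX0 hθ hθlt
      have hp := mul_pos (by linarith : (0:ℝ) < lamX'' - lamX')
        (by linarith : (0:ℝ) < 1 + θ * mX - (1 + mX) ^ θ)
      linarith [hp, hdiff]
    · right
      have bs : 1 + (θ * r0') * mX < (1 + mX) ^ (θ * r0') :=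
        one_add_mul_self_lt_rpow_one_add hmX.le hmX0 hgt
      have hpos : 0 < j'' r0' := by
        have hp := mul_pos (by linarith : (0:ℝ) < lamX'' - lamX')
          (by linarith : (0:ℝ) < (1 + mX) ^ (θ * r0') - (1 + (θ * r0') * mX))
        linarith [hp, hgap, hjr0'.le, hjr0'.ge]
      rcases eq_or_lt_of_le hle_r with heqr | hltr
      · exfalso; rw [heqr] at hjr0''; linarith
      · exact hltr
  refine ⟨hle, hr0'gt1, hr0''gt1, ?_⟩
  -- final inequality
  have hC : (0:ℝ) < κ1 - κ0 := by linarith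
  have hE' : (0:ℝ) < Real.exp (-(h' * n)) := Real.exp_pos _
  have hE'' : (0:ℝ) < Real.exp (-(h'' * n)) := Real.exp_pos _
  have hD' : 0 < (κ1 - κ0) * A' * (r0' - 1) := by
    rw [hA']
    exact mul_pos (mul_pos hC (div_pos hE' hh'pos)) (by linarith)
  have hD'' : 0 < (κ1 - κ0) * A'' * (r0'' - 1) := by
    rw [hA'']
    exact mul_pos (mul_pos hC (div_pos hE'' hh''pos)) (by linarith)
  rw [div_lt_div_iff₀ hD' hD'', hA', hA'']
  -- key product inequality
  have hEle : Real.exp (-(h'' * n)) ≤ Real.exp (-(h' * n)) := by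
    apply Real.exp_le_exp.mpr
    have := mul_le_mul_of_nonneg_right hle hn
    linarith
  have ha1 : 0 < r0' * (r0'' - 1) := mul_pos (by linarith) (by linarith)
  have ha12 : r0' * (r0'' - 1) ≤ r0'' * (r0' - 1) := by linarith [hle_r]
  have hb1 : 0 < Real.exp (-(h'' * n)) * h' := mul_pos hE'' hh'pos
  have hb12 : Real.exp (-(h'' * n)) * h' ≤ Real.exp (-(h' * n)) * h'' :=
    mul_le_mul hEle hle hh'pos.le hE'.le
  have key : r0' * (r0'' - 1) * (Real.exp (-(h'' * n)) * h')
      < r0'' * (r0' - 1) * (Real.exp (-(h' * n)) * h'') := by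
    rcases hstrict with hlt | hltr
    · have hb : Real.exp (-(h'' * n)) * h' < Real.exp (-(h' * n)) * h'' :=
        lt_of_lt_of_le (mul_lt_mul_of_pos_left hlt hE'') (mul_le_mul_of_nonneg_right hEle hh''pos.le)
      calc r0' * (r0'' - 1) * (Real.exp (-(h'' * n)) * h')
          < r0' * (r0'' - 1) * (Real.exp (-(h' * n)) * h'') := by
            exact mul_lt_mul_of_pos_left hb ha1
        _ ≤ r0'' * (r0' - 1) * (Real.exp (-(h' * n)) * h'') := by
            apply mul_le_mul_of_nonneg_right ha12
            positivity
    · have ha : r0' * (r0'' - 1) < r0'' * (r0' - 1) := by linarith [hltr]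
      calc r0' * (r0'' - 1) * (Real.exp (-(h'' * n)) * h')
          ≤ r0' * (r0'' - 1) * (Real.exp (-(h' * n)) * h'') := by
            exact mul_le_mul_of_nonneg_left hb12 ha1.le
        _ < r0'' * (r0' - 1) * (Real.exp (-(h' * n)) * h'') := by
            apply mul_lt_mul_of_pos_right ha
            exact mul_pos hE' hh''pos
  have e1 : r0' * ((κ1 - κ0) * (Real.exp (-(h'' * n)) / h'') * (r0'' - 1))
      = (κ1 - κ0) * (r0' * (r0'' - 1) * (Real.exp (-(h'' * n)) * h')) / (h' * h'') := by
    field_simp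
  have e2 : r0'' * ((κ1 - κ0) * (Real.exp (-(h' * n)) / h') * (r0' - 1))
      = (κ1 - κ0) * (r0'' * (r0' - 1) * (Real.exp (-(h' * n)) * h'')) / (h' * h'') := by
    field_simp
  rw [e1, e2]
  have hhh : 0 < h' * h'' := mul_pos hh'pos hh''pos
  rw [div_lt_div_iff₀ hhh hhh]
  exact mul_lt_mul_of_pos_right ((mul_lt_mul_iff_right₀ hC).mpr key) hhh
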